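/- Let f be a Boolean network of dimension n and ⟨f⟩ its interval-semantics encoding. For every i ∈ {1,…,n}: (2i, 2i−1) is a negative edge of G(⟨f⟩) if and only if there exists x ∈ 𝔹^n such that f_i(x) ≠ x_i. -/
import Mathlib


/-- Asynchronous transition relation of a Boolean network `f`:
`x → y` iff exactly one component `i` differs and `y i = f i x`. -/
def asyncStep {ι : Type} (f : ι → (ι → Bool) → Bool) (x y : ι → Bool) : Prop :=
  ∃ i : ι, x i ≠ y i ∧ (∀ j : ι, j ≠ i → x j = y j) ∧ y i = f i x

/-- Index of the "write" node `2i-1` (0-indexed: `2i`). -/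
def wIdx {n : ℕ} (i : Fin n) : Fin (2 * n) := ⟨2 * i.val, by have := i.isLt; omega⟩

/-- Index of the "read" node `2i` (0-indexed: `2i+1`). -/
def rIdx {n : ℕ} (i : Fin n) : Fin (2 * n) := ⟨2 * i.val + 1, by have := i.isLt; omega⟩

/-- `γ : 𝔹^{2n} → 𝔹^n`, projection on read nodes. -/
def gam {n : ℕ} (z : Fin (2 * n) → Bool) : Fin n → Bool := fun i => z (rIdx i)

/-- `α : 𝔹^n → 𝔹^{2n}`, consistent configuration. -/
def alph {n : ℕ} (x : Fin n → Bool) : Fin (2 * n) → Bool :=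
  fun k => x ⟨k.val / 2, by have := k.isLt; omega⟩

/-- Interval-semantics encoding `⟨f⟩` of a Boolean network `f`. -/
def encode {n : ℕ} (f : Fin n → (Fin n → Bool) → Bool) :
    Fin (2 * n) → (Fin (2 * n) → Bool) → Bool := fun k z =>
  let i : Fin n := ⟨k.val / 2, by have := k.isLt; omega⟩
  if k.val % 2 = 0 then
    (f i (gam z) && (!(z (rIdx i)) || z (wIdx i))) || (!(z (rIdx i)) && z (wIdx i))
  else
    z (wIdx i)

/-- Positive edge `(j,i)` of the influence graph `G(f)`. -/
def posEdge {ι : Type} (f : ι → (ι → Bool) → Bool) (j i : ι) : Prop :=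
  ∃ x y : ι → Bool, (∀ k : ι, k ≠ j → x k = y k) ∧ x j = false ∧ y j = true ∧
    f i x = false ∧ f i y = true

/-- Negative edge `(j,i)` of the influence graph `G(f)`. -/
def negEdge {ι : Type} (f : ι → (ι → Bool) → Bool) (j i : ι) : Prop :=
  ∃ x y : ι → Bool, (∀ k : ι, k ≠ j → x k = y k) ∧ x j = false ∧ y j = true ∧
    f i x = true ∧ f i y = false

lemma encode_w {n : ℕ} (f : Fin n → (Fin n → Bool) → Bool) (i : Fin n)
    (z : Fin (2 * n) → Bool) :
    encode f (wIdx i) z =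
      ((f i (gam z) && (!(z (rIdx i)) || z (wIdx i))) || (!(z (rIdx i)) && z (wIdx i))) := by
  have hv : (wIdx i).val = 2 * i.val := rfl
  have hmod : (wIdx i).val % 2 = 0 := by omega
  have hdiv : (⟨(wIdx i).val / 2, by have := (wIdx i).isLt; omega⟩ : Fin n) = i := by
    apply Fin.ext; simp only [hv]; omega
  simp only [encode, hdiv, if_pos hmod]

lemma rIdx_inj {n : ℕ} {a b : Fin n} (h : rIdx a = rIdx b) : a = b := by
  apply Fin.ext
  have := congrArg Fin.val h
  simp only [rIdx] at this; omega

lemma wr_ne {n : ℕ} (i : Fin n) : wIdx i ≠ rIdx i := by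
  intro h
  have := congrArg Fin.val h
  simp only [wIdx, rIdx] at this; omega

/-- `(2i, 2i−1)` is a negative edge of `G(⟨f⟩)` iff there exists
`x` with `f_i(x) ≠ x_i`. -/
theorem neg_read_write_iff {n : ℕ} (f : Fin n → (Fin n → Bool) → Bool) (i : Fin n) :
    negEdge (encode f) (rIdx i) (wIdx i) ↔ ∃ x : Fin n → Bool, f i x ≠ x i := by
  constructor
  · rintro ⟨z, z', hag, hzr, hz'r, h1, h2⟩
    rw [encode_w] at h1 h2
    have hzw : z (wIdx i) = z' (wIdx i) := hag _ (wr_ne i)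
    rw [hzr] at h1; rw [hz'r] at h2
    cases hb : z (wIdx i) with
    | true =>
      refine ⟨gam z', ?_⟩
      rw [← hzw, hb] at h2
      simp at h2
      rw [h2]
      simp [gam, hz'r]
    | false =>
      refine ⟨gam z, ?_⟩
      rw [hb] at h1
      simp at h1
      rw [h1]
      simp [gam, hzr]
  · rintro ⟨x, hx⟩
    set z : Fin (2 * n) → Bool := fun k => if k = rIdx i then false else alph x k with hz
    set z' : Fin (2 * n) → Bool := fun k => if k = rIdx i then true else alph x k with hz'
    have hag : ∀ k, k ≠ rIdx i → z k = z' k := by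
      intro k hk; simp only [hz, hz', if_neg hk]
    have hzr : z (rIdx i) = false := by simp [hz]
    have hz'r : z' (rIdx i) = true := by simp [hz']
    have hzw : z (wIdx i) = x i := by
      simp only [hz]
      rw [if_neg (wr_ne i)]
      simp only [alph]
      congr 1
      apply Fin.ext
      show (wIdx i).val / 2 = i.val
      simp only [wIdx]
      omega
    have hz'w : z' (wIdx i) = x i := by rw [← hag _ (wr_ne i), hzw]
    have hgam : ∀ j : Fin n, j ≠ i → gam z j = x j ∧ gam z' j = x j := by
      intro j hj
      have hne : rIdx j ≠ rIdx i := fun h => hj (rIdx_inj h)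
      have hval : (rIdx j).val / 2 = j.val := by simp only [rIdx]; omega
      constructor <;>
      · simp only [gam, hz, hz', if_neg hne, alph]
        congr 1
        exact Fin.ext hval
    refine ⟨z, z', hag, hzr, hz'r, ?_, ?_⟩
    · rw [encode_w, hzr, hzw]
      cases hxi : x i with
      | true => simp
      | false =>
        have hgz : gam z = x := by
          funext j
          by_cases hj : j = i
          · subst hj; simp [gam, hzr, hxi]
          · exact (hgam j hj).1
        rw [hxi] at hx
        have : f i x = true := by
          cases h : f i x
          · exact absurd h hx
          · rfl
        simp [hgz, this]
    · rw [encode_w, hz'r, hz'w]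
      cases hxi : x i with
      | false => simp
      | true =>
        have hgz' : gam z' = x := by
          funext j
          by_cases hj : j = i
          · subst hj; simp [gam, hz'r, hxi]
          · exact (hgam j hj).2
        rw [hxi] at hx
        have : f i x = false := by
          cases h : f i x
          · rfl
          · exact absurd h hx
        simp [hgz', this]
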